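/- Let G be a finite simple graph that is C_3-free, C_5-free and C_6-free, let R be a minimal redundant set of G, let x ∈ red(R), and let z_1, z_2 be two distinct vertices in R ∩ N²(x), where N²(x) is the set of vertices at distance exactly 2 from x. Then (N(z_1) ∩ N(z_2)) \ N(x) = ∅. -/

import Mathlib

open Set SimpleGraph

variable {V : Type*}

/-- The closed neighborhood `N[v]` of a vertex. -/
def closedNbr (G : SimpleGraph V) (v : V) : Set V := insert v (G.neighborSet v)

/-- Private neighbors of `x` with respect to `I`. -/
def privSet (G : SimpleGraph V) (x : V) (I : Set V) : Set V :=
  {y ∈ closedNbr G x | closedNbr G y ∩ I = {x}}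

/-- A set is irredundant if every element has a private neighbor. -/
def Irred (G : SimpleGraph V) (I : Set V) : Prop := ∀ x ∈ I, (privSet G x I).Nonempty

/-- A maximal irredundant set. -/
def MaxIrred (G : SimpleGraph V) (I : Set V) : Prop :=
  Irred G I ∧ ∀ J : Set V, Irred G J → I ⊆ J → J = I

def Redundant (G : SimpleGraph V) (R : Set V) : Prop := ¬ Irred G R

def MinRedundant (G : SimpleGraph V) (R : Set V) : Prop :=
  Redundant G R ∧ ∀ S : Set V, S ⊂ R → ¬ Redundant G S

/-- The set of redundant vertices of a set. -/
def redVerts (G : SimpleGraph V) (R : Set V) : Set V := {x ∈ R | privSet G x R = ∅}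

def Dominating (G : SimpleGraph V) (D : Set V) : Prop := ∀ v : V, ∃ d ∈ D, v ∈ closedNbr G d

def MinDominating (G : SimpleGraph V) (D : Set V) : Prop :=
  Dominating G D ∧ ∀ S : Set V, S ⊂ D → ¬ Dominating G S

/-- Vertices at distance at most 2 from `x`. -/
def ball2 (G : SimpleGraph V) (x : V) : Set V :=
  {y | y = x ∨ G.Adj x y ∨ ∃ w, G.Adj x w ∧ G.Adj w y}

/-- Vertices at distance exactly 2 from `x`. -/
def sphere2 (G : SimpleGraph V) (x : V) : Set V :=
  {y | y ≠ x ∧ ¬ G.Adj x y ∧ ∃ w, G.Adj x w ∧ G.Adj w y}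

/-- `G` contains no induced cycle of length `k`. -/
def CFree (G : SimpleGraph V) (k : ℕ) : Prop :=
  IsEmpty (SimpleGraph.cycleGraph k ↪g G)

/-- `S` dominates `B` through open neighborhoods. -/
def DomOver (G : SimpleGraph V) (S B : Set V) : Prop := ∀ b ∈ B, ∃ s ∈ S, G.Adj s b

def MinDomOver (G : SimpleGraph V) (S B : Set V) : Prop :=
  DomOver G S B ∧ ∀ S' : Set V, S' ⊂ S → ¬ DomOver G S' B

/-- `N(Y)`, the union of open neighborhoods of elements of `Y`. -/
def nbrUnion (G : SimpleGraph V) (Y : Set V) : Set V := ⋃ y ∈ Y, G.neighborSet y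

/-- Private edges of `x` with respect to `I` in a hypergraph. -/
def hypPriv (H : Set (Set V)) (x : V) (I : Set V) : Set (Set V) := {E ∈ H | E ∩ I = {x}}

def HypIrred (H : Set (Set V)) (I : Set V) : Prop := ∀ x ∈ I, (hypPriv H x I).Nonempty

def HypMaxIrred (H : Set (Set V)) (I : Set V) : Prop :=
  HypIrred H I ∧ ∀ J : Set V, HypIrred H J → I ⊆ J → J = I

/-- The trace of a hypergraph on a set `S`. -/
def htrace (H : Set (Set V)) (S : Set V) : Set (Set V) :=
  {F | ∃ E ∈ H, F = E ∩ S ∧ (E ∩ S).Nonempty}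

/-- The closed-neighborhood hypergraph of a graph. -/
def nbrHyp (G : SimpleGraph V) : Set (Set V) := Set.range (closedNbr G)

/-- The first `i` vertices in the ordering `v` (zero-based: `v 0, …, v (i-1)`). -/
def firstVerts (v : ℕ → V) (i : ℕ) : Set V := {x | ∃ j < i, v j = x}

/-- The incidence co-bipartite graph of the closed-neighborhood hypergraph of `G`:
`Sum.inl` is the vertex side `V`, `Sum.inr` is the copy `U`. -/
def cobip (G : SimpleGraph V) : SimpleGraph (V ⊕ V) :=
  SimpleGraph.fromRel (fun a b => match a, b with
    | Sum.inl _, Sum.inl _ => True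
    | Sum.inr _, Sum.inr _ => True
    | Sum.inl a, Sum.inr b => a = b ∨ G.Adj a b
    | Sum.inr _, Sum.inl _ => False)

def triangle_emb (G : SimpleGraph V) (a b c : V) (hab : G.Adj a b) (hbc : G.Adj b c)
    (hac : G.Adj a c) : SimpleGraph.cycleGraph 3 ↪g G := by
  have hba := hab.symm; have hcb := hbc.symm; have hca := hac.symm
  have dab := hab.ne; have dbc := hbc.ne; have dac := hac.ne
  have dba := hba.ne; have dcb := hcb.ne; have dca := hca.ne
  have naa : ¬ G.Adj a a := G.irrefl
  have nbb : ¬ G.Adj b b := G.irrefl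
  have ncc : ¬ G.Adj c c := G.irrefl
  refine ⟨⟨![a,b,c], ?_⟩, ?_⟩
  · intro u v h
    fin_cases u <;> fin_cases v <;> first | rfl | exact absurd h (by assumption)
  · intro u v
    fin_cases u <;> fin_cases v <;>
      first
        | exact iff_of_true (by assumption) (by decide)
        | exact iff_of_false (by assumption) (by decide)

set_option maxHeartbeats 1600000 in
def c6_emb (G : SimpleGraph V) (a b c d e f : V)
    (hab : G.Adj a b) (hbc : G.Adj b c) (hcd : G.Adj c d) (hde : G.Adj d e)
    (hef : G.Adj e f) (hfa : G.Adj f a)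
    (nac : ¬ G.Adj a c) (nad : ¬ G.Adj a d) (nae : ¬ G.Adj a e)
    (nbd : ¬ G.Adj b d) (nbe : ¬ G.Adj b e) (nbf : ¬ G.Adj b f)
    (nce : ¬ G.Adj c e) (ncf : ¬ G.Adj c f) (ndf : ¬ G.Adj d f)
    (dac : a ≠ c) (dad : a ≠ d) (dae : a ≠ e) (dbd : b ≠ d) (dbe : b ≠ e) (dbf : b ≠ f)
    (dce : c ≠ e) (dcf : c ≠ f) (ddf : d ≠ f) :
    SimpleGraph.cycleGraph 6 ↪g G := by
  have hba := hab.symm; have hcb := hbc.symm; have hdc := hcd.symm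
  have hed := hde.symm; have hfe := hef.symm; have haf := hfa.symm
  have dab := hab.ne; have dbc := hbc.ne; have dcd := hcd.ne
  have dde := hde.ne; have def' := hef.ne; have dfa := hfa.ne
  have dba := hba.ne; have dcb := hcb.ne; have ddc := hdc.ne
  have ded := hed.ne; have dfe := hfe.ne; have daf := haf.ne
  have dca := dac.symm; have dda := dad.symm; have dea := dae.symm
  have ddb := dbd.symm; have deb := dbe.symm; have dfb := dbf.symm
  have dec' := dce.symm; have dfc := dcf.symm; have dfd := ddf.symm
  have nca : ¬ G.Adj c a := fun h => nac h.symm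
  have nda : ¬ G.Adj d a := fun h => nad h.symm
  have nea : ¬ G.Adj e a := fun h => nae h.symm
  have ndb : ¬ G.Adj d b := fun h => nbd h.symm
  have neb : ¬ G.Adj e b := fun h => nbe h.symm
  have nfb : ¬ G.Adj f b := fun h => nbf h.symm
  have nec : ¬ G.Adj e c := fun h => nce h.symm
  have nfc : ¬ G.Adj f c := fun h => ncf h.symm
  have nfd : ¬ G.Adj f d := fun h => ndf h.symm
  have naa : ¬ G.Adj a a := G.irrefl
  have nbb : ¬ G.Adj b b := G.irrefl
  have ncc : ¬ G.Adj c c := G.irrefl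
  have ndd : ¬ G.Adj d d := G.irrefl
  have nee : ¬ G.Adj e e := G.irrefl
  have nff : ¬ G.Adj f f := G.irrefl
  refine ⟨⟨![a,b,c,d,e,f], ?_⟩, ?_⟩
  · intro u v h
    fin_cases u <;> fin_cases v <;> first | rfl | exact absurd h (by assumption)
  · intro u v
    fin_cases u <;> fin_cases v <;>
      first
        | exact iff_of_true (by assumption) (by decide)
        | exact iff_of_false (by assumption) (by decide)

lemma key_lemma (G : SimpleGraph V) (R : Set V) (hR : MinRedundant G R) (x : V)
    (hx : x ∈ redVerts G R) (y : V) (hyR : y ∈ R) (hy : y ∈ sphere2 G x) :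
    ∃ p, G.Adj x p ∧ G.Adj p y ∧ closedNbr G p ∩ R ⊆ {x, y} := by
  obtain ⟨hxR, hpriv⟩ := hx
  obtain ⟨hyx, hxy, -⟩ := hy
  have hsub : R \ {y} ⊂ R := Set.sdiff_singleton_ssubset.mpr hyR
  have hirr : Irred G (R \ {y}) := not_not.mp (hR.2 _ hsub)
  have hxR' : x ∈ R \ {y} := ⟨hxR, fun h => hyx (Set.mem_singleton_iff.mp h).symm⟩
  obtain ⟨p, hp1, hp2⟩ := hirr x hxR'
  -- hp1 : p ∈ closedNbr G x, hp2 : closedNbr G p ∩ (R \ {y}) = {x}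
  have hne' : closedNbr G p ∩ R ≠ {x} := by
    intro h
    have : p ∈ privSet G x R := ⟨hp1, h⟩
    rw [hpriv] at this
    exact this
  have hxin : x ∈ closedNbr G p := by
    have : x ∈ closedNbr G p ∩ (R \ {y}) := hp2 ▸ rfl
    exact this.1
  have hsub2 : closedNbr G p ∩ R ⊆ {x, y} := by
    intro q ⟨hq1, hq2⟩
    by_cases h : q = y
    · exact Or.inr h
    · have : q ∈ closedNbr G p ∩ (R \ {y}) := ⟨hq1, hq2, h⟩
      rw [hp2] at this
      exact Or.inl this
  have hyin : y ∈ closedNbr G p := by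
    by_contra h
    apply hne'
    apply Set.Subset.antisymm
    · intro q hq
      rcases hsub2 hq with h1 | h1
      · exact h1
      · exact absurd (h1 ▸ hq.1) h
    · intro q hq
      rw [Set.mem_singleton_iff.mp hq]
      exact ⟨hxin, hxR⟩
  have hxp : G.Adj x p := by
    rcases hp1 with h | h
    · subst h
      rcases hyin with h | h
      · exact absurd h hyx
      · exact absurd h hxy
    · exact h
  have hpy : G.Adj p y := by
    rcases hyin with h | h
    · subst h
      exact absurd hxp hxy
    · exact h
  exact ⟨p, hxp, hpy, hsub2⟩

/-- in a `(C₃, C₅, C₆)`-free graph, two distinct vertices of `R ∩ N²(x)`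
(for `x ∈ red(R)`, `R` a minimal redundant set) share no common neighbor outside `N(x)`. -/
theorem stmt9 [Fintype V] (G : SimpleGraph V) (h3 : CFree G 3) (h5 : CFree G 5)
    (h6 : CFree G 6) (R : Set V) (hR : MinRedundant G R) (x : V) (hx : x ∈ redVerts G R)
    (z1 z2 : V) (hz1 : z1 ∈ R ∩ sphere2 G x) (hz2 : z2 ∈ R ∩ sphere2 G x) (hne : z1 ≠ z2) :
    (G.neighborSet z1 ∩ G.neighborSet z2) \ G.neighborSet x = ∅ := by
  by_contra hcon
  obtain ⟨w, ⟨hwz1, hwz2⟩, hwx'⟩ := Set.nonempty_iff_ne_empty.mpr hcon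
  have hz1w : G.Adj z1 w := hwz1
  have hz2w : G.Adj z2 w := hwz2
  have hwx : ¬ G.Adj x w := hwx'
  obtain ⟨hz1R, hz1s⟩ := hz1
  obtain ⟨hz2R, hz2s⟩ := hz2
  have hz1x := hz1s.1
  have hxz1 := hz1s.2.1
  have hz2x := hz2s.1
  have hxz2 := hz2s.2.1
  obtain ⟨p1, hxp1, hp1z1, hcl1⟩ := key_lemma G R hR x hx z1 hz1R hz1s
  obtain ⟨p2, hxp2, hp2z2, hcl2⟩ := key_lemma G R hR x hx z2 hz2R hz2s
  have np1z2 : z2 ∉ closedNbr G p1 := by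
    intro h
    rcases hcl1 ⟨h, hz2R⟩ with h1 | h1
    · exact hz2x h1
    · exact hne h1.symm
  have np2z1 : z1 ∉ closedNbr G p2 := by
    intro h
    rcases hcl2 ⟨h, hz1R⟩ with h1 | h1
    · exact hz1x h1
    · exact hne h1
  have np1z2' : ¬ G.Adj p1 z2 := fun h => np1z2 (Set.mem_insert_iff.mpr (Or.inr h))
  have np2z1' : ¬ G.Adj p2 z1 := fun h => np2z1 (Set.mem_insert_iff.mpr (Or.inr h))
  have dp1z2 : p1 ≠ z2 := fun h => np1z2 (Set.mem_insert_iff.mpr (Or.inl h.symm))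
  have dp2z1 : p2 ≠ z1 := fun h => np2z1 (Set.mem_insert_iff.mpr (Or.inl h.symm))
  have dp1p2 : p1 ≠ p2 := by
    intro h
    exact np1z2 (h ▸ (Set.mem_insert_iff.mpr (Or.inr hp2z2) : z2 ∈ closedNbr G p2))
  have dwx : w ≠ x := fun h => hxz1 (h ▸ hz1w).symm
  have dp1w : p1 ≠ w := fun h => hwx (h ▸ hxp1)
  have dp2w : p2 ≠ w := fun h => hwx (h ▸ hxp2)
  -- non-adjacencies via triangles
  have np1w : ¬ G.Adj p1 w := fun h => h3.false (triangle_emb G p1 z1 w hp1z1 hz1w h)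
  have np2w : ¬ G.Adj p2 w := fun h => h3.false (triangle_emb G p2 z2 w hp2z2 hz2w h)
  have np1p2 : ¬ G.Adj p1 p2 := fun h => h3.false (triangle_emb G x p1 p2 hxp1 h hxp2)
  have nz1z2 : ¬ G.Adj z1 z2 := fun h => h3.false (triangle_emb G z1 z2 w h hz2w hz1w)
  -- build the induced 6-cycle x p1 z1 w z2 p2
  exact h6.false (c6_emb G x p1 z1 w z2 p2
    hxp1 hp1z1 hz1w hz2w.symm hp2z2.symm hxp2.symm
    hxz1 hwx hxz2
    np1w np1z2' np1p2
    nz1z2 (fun h => np2z1' h.symm) (fun h => np2w h.symm)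
    hz1x.symm dwx.symm hz2x.symm dp1w dp1z2 dp1p2 hne dp2z1.symm dp2w.symm)
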